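/- Let σ be a field automorphism of F_q with σ ≠ id and let M be an invertible (n+1)×(n+1) matrix over F_q. If W is a linear subspace of the space of row vectors F_q^{n+1} such that every nonzero ξ ∈ W satisfies ξ·M = λ·ξ^σ for some nonzero λ ∈ F_q, then dim W ≤ 1. -/

import Mathlib

open Matrix

theorem stmt_5 (F : Type) [Field F] [Fintype F] (n : ℕ) (hn : 2 ≤ n)
    (σ : F ≃+* F) (hσ : σ ≠ RingEquiv.refl F)
    (M : Matrix (Fin (n + 1)) (Fin (n + 1)) F) (hM : IsUnit M)
    (W : Submodule F (Fin (n + 1) → F))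
    (hW : ∀ ξ ∈ W, ξ ≠ 0 → ∃ l : F, l ≠ 0 ∧ ξ ᵥ* M = l • (fun i => σ (ξ i))) :
    Module.finrank F W ≤ 1 := by
  by_contra h
  have h2 : 2 ≤ Module.finrank F W := by omega
  obtain ⟨f, hf⟩ := exists_linearIndependent_of_le_finrank h2
  have hg : LinearIndependent F (fun i => ((f i : Fin (n+1) → F))) :=
    hf.map' W.subtype W.ker_subtype
  set ξ : Fin (n+1) → F := (f 0 : Fin (n+1) → F) with hξdef
  set η : Fin (n+1) → F := (f 1 : Fin (n+1) → F) with hηdef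
  have key : ∀ s t : F, s • ξ + t • η = 0 → s = 0 ∧ t = 0 := by
    intro s t hst
    have := Fintype.linearIndependent_iff.mp hg ![s, t] ?_
    · exact ⟨this 0, this 1⟩
    · simpa [Fin.sum_univ_two] using hst
  have hξ0 : ξ ≠ 0 := by
    intro h0
    have := (key 1 0 (by simp [h0])).1
    simp at this
  -- eigen relations
  have hξW : ξ ∈ W := (f 0).2
  have hηW : η ∈ W := (f 1).2
  obtain ⟨l₁, hl₁0, hl₁⟩ := hW ξ hξW hξ0
  obtain ⟨l₂, hl₂0, hl₂⟩ := hW η hηW (by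
    intro h0
    have := (key 0 1 (by simp [h0])).2
    simp at this)
  have main : ∀ c : F, c ≠ 0 → c * l₂ = l₁ * σ c := by
    intro c hc
    have hmem : ξ + c • η ∈ W := W.add_mem hξW (W.smul_mem c hηW)
    have hne : ξ + c • η ≠ 0 := by
      intro h0
      have := (key 1 c (by simpa using h0)).1
      simp at this
    obtain ⟨l₃, hl₃0, hl₃⟩ := hW _ hmem hne
    -- expand both sides of hl₃
    have hLHS : (ξ + c • η) ᵥ* M = l₁ • (fun i => σ (ξ i)) + (c * l₂) • (fun i => σ (η i)) := by
      rw [add_vecMul, smul_vecMul, hl₁, hl₂]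
      funext i
      simp [mul_assoc, Pi.smul_apply, smul_eq_mul]
    have hRHS : (l₃ • fun i => σ ((ξ + c • η) i))
        = l₃ • (fun i => σ (ξ i)) + (l₃ * σ c) • (fun i => σ (η i)) := by
      funext i
      simp only [Pi.add_apply, Pi.smul_apply, smul_eq_mul, map_add, _root_.map_mul]
      ring
    have heq : l₁ • (fun i => σ (ξ i)) + (c * l₂) • (fun i => σ (η i))
        = l₃ • (fun i => σ (ξ i)) + (l₃ * σ c) • (fun i => σ (η i)) := by
      rw [← hLHS, hl₃, hRHS]
    -- pull back through σ
    have heq2 : (σ.symm (l₁ - l₃)) • ξ + (σ.symm (c * l₂ - l₃ * σ c)) • η = 0 := by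
      funext i
      have hi := congrFun heq i
      simp only [Pi.add_apply, Pi.smul_apply, smul_eq_mul] at hi ⊢
      have : σ ((σ.symm (l₁ - l₃)) * ξ i + (σ.symm (c * l₂ - l₃ * σ c)) * η i) = 0 := by
        simp only [map_add, _root_.map_mul, RingEquiv.apply_symm_apply, map_sub]
        linear_combination hi
      have := congrArg σ.symm this
      simpa using this
    obtain ⟨e1, e2⟩ := key _ _ heq2
    have e1' : l₁ = l₃ := by
      have := congrArg σ e1
      simp only [RingEquiv.apply_symm_apply, map_zero] at this
      exact sub_eq_zero.mp this
    have e2' : c * l₂ = l₃ * σ c := by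
      have := congrArg σ e2
      simp only [RingEquiv.apply_symm_apply, map_zero] at this
      exact sub_eq_zero.mp this
    rw [e1']; exact e2'
  have h1 : l₂ = l₁ := by
    have := main 1 one_ne_zero
    simpa using this
  -- pick c with σ c ≠ c
  obtain ⟨c, hc⟩ : ∃ c : F, σ c ≠ c := by
    by_contra hall
    push_neg at hall
    exact hσ (RingEquiv.ext hall)
  have hc0 : c ≠ 0 := by
    intro h0
    exact hc (by simp [h0])
  have := main c hc0
  rw [h1, mul_comm] at this
  exact hc (mul_left_cancel₀ hl₁0 this.symm)
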